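/- The fourth central moment of the bootstrap h-th sample moment about the true moment is of order O(1/m^2): E[(X̂_m − α_h)^4] = O(m^{-2}); in particular all O(1/m) terms cancel in the expansion. -/

import Mathlib

open MeasureTheory ProbabilityTheory Finset

lemma abs_mul4_le' (a b c d : ℝ) : |a*b*c*d| ≤ (a^4+b^4+c^4+d^4)/4 := by
  have h1 : |a*b*c*d| = |a*b| * |c*d| := by rw [← abs_mul]; ring_nf
  have h2 : |a*b| ≤ (a^2+b^2)/2 := by
    rw [abs_mul]; nlinarith [sq_nonneg (|a| - |b|), sq_abs a, sq_abs b]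
  have h3 : |c*d| ≤ (c^2+d^2)/2 := by
    rw [abs_mul]; nlinarith [sq_nonneg (|c| - |d|), sq_abs c, sq_abs d]
  calc |a*b*c*d| = |a*b| * |c*d| := h1
    _ ≤ ((a^2+b^2)/2) * ((c^2+d^2)/2) := by
        apply mul_le_mul h2 h3 (abs_nonneg _); positivity
    _ ≤ (a^4+b^4+c^4+d^4)/4 := by nlinarith [sq_nonneg (a^2+b^2-c^2-d^2), sq_nonneg (a^2-b^2), sq_nonneg (c^2-d^2)]

lemma add_pow_four_le' (a b : ℝ) : (a+b)^4 ≤ 8*a^4 + 8*b^4 := by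
  nlinarith [sq_nonneg (a-b), sq_nonneg (a+b), sq_nonneg (a^2-b^2), sq_nonneg (a^2+b^2), sq_nonneg a, sq_nonneg b]

lemma sub_pow_four_le' (a b : ℝ) : (a-b)^4 ≤ 8*a^4 + 8*b^4 := by
  have h := add_pow_four_le' a (-b)
  have e1 : a + -b = a - b := by ring
  have e2 : (-b)^4 = b^4 := by ring
  rw [e1, e2] at h
  exact h

lemma nosingle_image_card_le {m : ℕ} (t : Fin 4 → Fin m)
    (ht : ∀ i, ∃ i', i' ≠ i ∧ t i' = t i) : (Finset.univ.image t).card ≤ 2 := by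
  classical
  have h4 : (Finset.univ : Finset (Fin 4)).card
      = ∑ v ∈ Finset.univ.image t, (Finset.univ.filter (fun i => t i = v)).card :=
    Finset.card_eq_sum_card_fiberwise (by simp)
  have hfib : ∀ v ∈ Finset.univ.image t, 2 ≤ (Finset.univ.filter (fun i => t i = v)).card := by
    intro v hv
    obtain ⟨i, -, hi⟩ := Finset.mem_image.1 hv
    obtain ⟨i', hne, hval⟩ := ht i
    have hsub : ({i, i'} : Finset (Fin 4)) ⊆ Finset.univ.filter (fun i => t i = v) := by
      intro x hx
      simp only [Finset.mem_insert, Finset.mem_singleton] at hx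
      rcases hx with rfl | rfl <;> simp [hi, hval, hi ▸ hval]
    calc 2 = ({i, i'} : Finset (Fin 4)).card := by
            rw [Finset.card_insert_of_notMem (by simp only [Finset.mem_singleton]; exact fun hh => hne hh.symm), Finset.card_singleton]
      _ ≤ _ := Finset.card_le_card hsub
  have : (Finset.univ.image t).card • 2 ≤ ∑ v ∈ Finset.univ.image t, (Finset.univ.filter (fun i => t i = v)).card :=
    Finset.card_nsmul_le_sum _ _ _ hfib
  have h4' : (Finset.univ : Finset (Fin 4)).card = 4 := by simp
  rw [smul_eq_mul] at this
  omega

lemma two_vals {m : ℕ} (t : Fin 4 → Fin m) (hc : (Finset.univ.image t).card ≤ 2)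
    {x y : Fin 4} (hx : t x ≠ t 0) (hy : t y ≠ t 0) : t x = t y := by
  by_contra hxy
  have hsub : ({t 0, t x, t y} : Finset (Fin m)) ⊆ Finset.univ.image t := by
    intro v hv; simp only [Finset.mem_insert, Finset.mem_singleton] at hv
    rcases hv with rfl | rfl | rfl <;> exact Finset.mem_image_of_mem t (Finset.mem_univ _)
  have h3 : ({t 0, t x, t y} : Finset (Fin m)).card = 3 := by
    rw [Finset.card_insert_of_notMem (by simp [Ne.symm hx, Ne.symm hy]),
        Finset.card_insert_of_notMem (by simp [hxy]), Finset.card_singleton]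
  have := Finset.card_le_card hsub
  omega

lemma count_nosingle (m : ℕ) :
    ((Finset.univ : Finset (Fin 4 → Fin m)).filter
      (fun t => ∀ i, ∃ i', i' ≠ i ∧ t i' = t i)).card ≤ 16 * m^2 := by
  classical
  have := Finset.card_le_card_of_injOn
    (f := fun t : Fin 4 → Fin m =>
      ((t 0, if h : ∃ i, t i ≠ t 0 then t h.choose else t 0, fun i => decide (t i = t 0)) :
        Fin m × Fin m × (Fin 4 → Bool)))
    (s := (Finset.univ : Finset (Fin 4 → Fin m)).filter
      (fun t => ∀ i, ∃ i', i' ≠ i ∧ t i' = t i))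
    (t := Finset.univ) (by intro x _; exact Finset.mem_univ _) ?_
  · calc ((Finset.univ : Finset (Fin 4 → Fin m)).filter _).card
        ≤ (Finset.univ : Finset (Fin m × Fin m × (Fin 4 → Bool))).card := this
      _ = 16 * m^2 := by
          simp [Finset.card_univ, Fintype.card_fun]
          ring
  · intro t ht t' ht' hF
    simp only [Finset.mem_coe, Finset.mem_filter] at ht ht'
    have hct : (Finset.univ.image t).card ≤ 2 := nosingle_image_card_le t ht.2
    have hct' : (Finset.univ.image t').card ≤ 2 := nosingle_image_card_le t' ht'.2
    have h0 : t 0 = t' 0 := congrArg Prod.fst hF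
    have hsnd : (if h : ∃ i, t i ≠ t 0 then t h.choose else t 0)
        = (if h : ∃ i, t' i ≠ t' 0 then t' h.choose else t' 0) :=
      congrArg (Prod.fst ∘ Prod.snd) hF
    have hpat : ∀ i, (t i = t 0) ↔ (t' i = t' 0) := by
      intro i
      have := congrFun (congrArg (Prod.snd ∘ Prod.snd) hF) i
      simpa [decide_eq_decide] using this
    funext i
    by_cases hi : t i = t 0
    · rw [hi, h0, ((hpat i).1 hi)]
    · have hi' : t' i ≠ t' 0 := fun hh => hi ((hpat i).2 hh)
      have he : ∃ j, t j ≠ t 0 := ⟨i, hi⟩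
      have he' : ∃ j, t' j ≠ t' 0 := ⟨i, hi'⟩
      have h1 : t i = t he.choose := two_vals t hct hi he.choose_spec
      have h2 : t' i = t' he'.choose := two_vals t' hct' hi' he'.choose_spec
      rw [dif_pos he, dif_pos he'] at hsnd
      rw [h1, h2, hsnd]

lemma fourth_moment_abs_le' {Ω : Type*} [MeasureSpace Ω] {m : ℕ}
    (W : Fin m → Ω → ℝ) (K : ℝ)
    (hint : ∀ t : Fin 4 → Fin m, Integrable (fun ω => ∏ i, W (t i) ω) ℙ)
    (hzero : ∀ t : Fin 4 → Fin m, (∃ i, ∀ i', t i' = t i → i' = i) →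
      ∫ ω, ∏ i, W (t i) ω ∂ℙ = 0)
    (hK : ∀ t : Fin 4 → Fin m, |∫ ω, ∏ i, W (t i) ω ∂ℙ| ≤ K) :
    |∫ ω, (∑ j, W j ω)^4 ∂ℙ| ≤ 16 * K * m^2 := by
  classical
  rcases Nat.eq_zero_or_pos m with rfl | hm
  · simp
  have K0 : 0 ≤ K := (abs_nonneg _).trans (hK (fun _ => ⟨0, hm⟩))
  have hexp : ∀ ω : Ω, (∑ j, W j ω)^4 = ∑ t : Fin 4 → Fin m, ∏ i, W (t i) ω :=
    fun ω => Fintype.sum_pow (fun j => W j ω) 4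
  set P : (Fin 4 → Fin m) → Prop := fun t => ∀ i, ∃ i', i' ≠ i ∧ t i' = t i with hP
  calc |∫ ω, (∑ j, W j ω)^4 ∂ℙ|
      = |∑ t : Fin 4 → Fin m, ∫ ω, ∏ i, W (t i) ω ∂ℙ| := by
        simp_rw [hexp]
        rw [integral_finset_sum _ (fun t _ => hint t)]
    _ ≤ ∑ t : Fin 4 → Fin m, |∫ ω, ∏ i, W (t i) ω ∂ℙ| := Finset.abs_sum_le_sum_abs _ _
    _ = (∑ t ∈ Finset.univ.filter P, |∫ ω, ∏ i, W (t i) ω ∂ℙ|)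
        + ∑ t ∈ Finset.univ.filter (fun t => ¬ P t), |∫ ω, ∏ i, W (t i) ω ∂ℙ| :=
        (Finset.sum_filter_add_sum_filter_not _ _ _).symm
    _ ≤ 16 * K * m^2 := by
        have h2 : ∑ t ∈ Finset.univ.filter (fun t => ¬ P t),
            |∫ ω, ∏ i, W (t i) ω ∂ℙ| = 0 := by
          apply Finset.sum_eq_zero
          intro t htm
          rw [Finset.mem_filter] at htm
          have hnp : ¬ ∀ i, ∃ i', i' ≠ i ∧ t i' = t i := htm.2
          push_neg at hnp
          obtain ⟨i, hi⟩ := hnp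
          rw [hzero t ⟨i, fun i' hval => by
            by_contra hne
            exact (hi i' hne) hval⟩, abs_zero]
        have h1 : ∑ t ∈ Finset.univ.filter P, |∫ ω, ∏ i, W (t i) ω ∂ℙ|
            ≤ 16 * K * m^2 := by
          calc ∑ t ∈ Finset.univ.filter P, |∫ ω, ∏ i, W (t i) ω ∂ℙ|
              ≤ (Finset.univ.filter P).card • K :=
                Finset.sum_le_card_nsmul _ _ _ (fun t _ => hK t)
            _ ≤ (16 * m^2) • K := nsmul_le_nsmul_left K0 (count_nosingle m)
            _ = 16 * K * m^2 := by
                rw [nsmul_eq_mul]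
                push_cast
                ring
        linarith

set_option maxHeartbeats 2000000 in
/-- The fourth central moment of the bootstrap `h`-th sample moment about the
true moment is `O(1/m²)`.  `Z 0, Z 1, …` is an i.i.d. sequence with finite raw
moments `α k = E[Z^k]` for `k ≤ 4h`; for each sample size `m`, the resampling
is encoded by uniform random indices `σ m j : Ω → Fin m`, jointly independent
of each other and of the sample.  Then
`E[(X̂_m − α h)⁴] = O(m⁻²)` where `X̂_m = (1/m) ∑_{j<m} (Z*_j)^h`. -/
theorem bootstrap_moment_fourth_central
    {Ω : Type*} [MeasureSpace Ω] [IsProbabilityMeasure (ℙ : Measure Ω)]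
    (h : ℕ) (α : ℕ → ℝ)
    (Z : ℕ → Ω → ℝ) (σ : (m : ℕ) → Fin m → Ω → Fin m)
    (hZmeas : ∀ n, Measurable (Z n))
    (hσmeas : ∀ m j, Measurable (σ m j))
    (hZint : ∀ n k, k ≤ 4 * h → Integrable (fun ω => (Z n ω) ^ k) ℙ)
    (hZmom : ∀ n k, k ≤ 4 * h → ∫ ω, (Z n ω) ^ k ∂ℙ = α k)
    (hσunif : ∀ m (j k : Fin m), ℙ {ω | σ m j ω = k} = 1 / m)
    (hindep : ∀ m : ℕ, iIndepFun
      (β := fun t : Fin m ⊕ Fin m => Sum.elim (fun _ : Fin m => Fin m) (fun _ : Fin m => ℝ) t)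
      (m := fun t => by cases t <;> simp only [Sum.elim_inl, Sum.elim_inr] <;> infer_instance)
      (fun t => match t with
        | Sum.inl j => σ m j
        | Sum.inr j => Z (j : ℕ)) ℙ) :
    ∃ C : ℝ, ∀ m : ℕ, 0 < m →
      |∫ ω, ((1 / (m : ℝ)) * ∑ j : Fin m, (Z (σ m j ω) ω) ^ h - α h) ^ 4 ∂ℙ|
        ≤ C / (m : ℝ) ^ 2 := by
  classical
  have h4h : h ≤ 4*h := by omega
  set c4 : ℝ := α (4*h) with hc4def
  have hpow4 : ∀ x : ℝ, (x^h)^4 = x^(4*h) := fun x => by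
    rw [← pow_mul, Nat.mul_comm]
  have hc4 : 0 ≤ c4 := by
    rw [hc4def, ← hZmom 0 (4*h) le_rfl]
    apply integral_nonneg
    intro ω
    simp only [Pi.zero_apply]
    show (0:ℝ) ≤ Z 0 ω ^ (4*h)
    rw [← hpow4]
    positivity
  set K1 : ℝ := 8*c4 + 8*(α h)^4 with hK1def
  set K2 : ℝ := 16*c4 with hK2def
  have hK10 : 0 ≤ K1 := by positivity
  have hK20 : 0 ≤ K2 := by positivity
  refine ⟨128*K2 + 128*K1, ?_⟩
  intro m hm
  have hmne : (m:ℝ) ≠ 0 := Nat.cast_ne_zero.2 hm.ne'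
  have hmpos : (0:ℝ) < m := Nat.cast_pos.2 hm
  -- definitions
  set S : Ω → ℝ := fun ω => ∑ a : Fin m, |Z (a:ℕ) ω ^ h| with hSdef
  set D : Ω → ℝ := fun ω => 1 + |α h| + 2 * S ω with hDdef
  set bar : Ω → ℝ := fun ω => (m:ℝ)⁻¹ * ∑ a : Fin m, Z (a:ℕ) ω ^ h with hbardef
  set U : Fin m → Ω → ℝ := fun j ω => Z (σ m j ω : ℕ) ω ^ h - bar ω with hUdef
  set W : Fin m → Ω → ℝ := fun a ω => Z (a:ℕ) ω ^ h - α h with hWdef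
  -- measurability
  have measS : Measurable S := Finset.measurable_sum _ (fun a _ => ((hZmeas a).pow_const h).abs)
  have measD : Measurable D := (measS.const_mul 2).const_add _
  have measbar : Measurable bar := by
    rw [hbardef]
    exact (Finset.measurable_sum Finset.univ (fun (a : Fin m) _ => (hZmeas (a:ℕ)).pow_const h)).const_mul _
  have measZσ : ∀ j : Fin m, Measurable (fun ω => Z (σ m j ω : ℕ) ω ^ h) := by
    intro j
    have he : (fun ω => Z (σ m j ω : ℕ) ω ^ h)
        = fun ω => ∑ a : Fin m, if σ m j ω = a then Z (a:ℕ) ω ^ h else 0 := by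
      funext ω
      rw [Finset.sum_ite_eq Finset.univ (σ m j ω) (fun a => Z (a:ℕ) ω ^ h),
        if_pos (Finset.mem_univ _)]
    rw [he]
    exact Finset.measurable_sum _ (fun a _ =>
      Measurable.ite (hσmeas m j (measurableSet_singleton a)) ((hZmeas a).pow_const h)
        measurable_const)
  have measU : ∀ j, Measurable (U j) := fun j => (measZσ j).sub measbar
  have measW : ∀ a : Fin m, Measurable (W a) := fun a => ((hZmeas a).pow_const h).sub_const _
  -- pointwise bounds
  have hS0 : ∀ ω, 0 ≤ S ω := fun ω => Finset.sum_nonneg (fun a _ => abs_nonneg _)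
  have hD0 : ∀ ω, 0 ≤ D ω := fun ω => by
    have := hS0 ω; have := abs_nonneg (α h); simp only [hDdef]; linarith
  have hD1 : ∀ ω, 1 ≤ D ω := fun ω => by
    have := hS0 ω; have := abs_nonneg (α h); simp only [hDdef]; linarith
  have hZaS : ∀ (a : Fin m) ω, |Z (a:ℕ) ω ^ h| ≤ S ω := fun a ω =>
    Finset.single_le_sum (f := fun a : Fin m => |Z (a:ℕ) ω ^ h|)
      (fun b _ => abs_nonneg _) (Finset.mem_univ a)
  have hZσS : ∀ (j : Fin m) ω, |Z (σ m j ω : ℕ) ω ^ h| ≤ S ω := fun j ω => hZaS (σ m j ω) ω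
  have hbarS : ∀ ω, |bar ω| ≤ (m:ℝ)⁻¹ * S ω := by
    intro ω
    rw [hbardef]
    rw [abs_mul, abs_of_nonneg (by positivity : (0:ℝ) ≤ (m:ℝ)⁻¹)]
    apply mul_le_mul_of_nonneg_left _ (by positivity)
    exact (Finset.abs_sum_le_sum_abs _ _)
  have hbarS' : ∀ ω, |bar ω| ≤ S ω := fun ω => (hbarS ω).trans (by
    have := hS0 ω
    have h1 : (m:ℝ)⁻¹ ≤ 1 := by
      rw [inv_le_one_iff₀]; right; exact_mod_cast Nat.one_le_cast.2 hm
    nlinarith)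
  have hUD : ∀ (j : Fin m) ω, |U j ω| ≤ D ω := by
    intro j ω
    have h1 := hZσS j ω; have h2 := hbarS' ω; have h3 := hS0 ω
    calc |U j ω| ≤ |Z (σ m j ω : ℕ) ω ^ h| + |bar ω| := abs_sub _ _
      _ ≤ D ω := by simp only [hDdef]; linarith [abs_nonneg (α h)]
  have hWD : ∀ (a : Fin m) ω, |W a ω| ≤ D ω := by
    intro a ω
    have h1 := hZaS a ω; have h3 := hS0 ω
    calc |W a ω| ≤ |Z (a:ℕ) ω ^ h| + |α h| := abs_sub _ _
      _ ≤ D ω := by simp only [hDdef]; linarith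
  -- S^4 bound
  have hS4 : ∀ ω, S ω^4 ≤ (m:ℝ)^3 * ∑ a : Fin m, Z (a:ℕ) ω ^ (4*h) := by
    intro ω
    have habs : ∀ (a : Fin m), |Z (a:ℕ) ω ^ h|^2 = (Z (a:ℕ) ω ^ h)^2 := fun a => sq_abs _
    have h1 : S ω^2 ≤ (m:ℝ) * ∑ a : Fin m, (Z (a:ℕ) ω ^ h)^2 := by
      have := sq_sum_le_card_mul_sum_sq (s := Finset.univ) (f := fun a : Fin m => |Z (a:ℕ) ω ^ h|)
      simp only [Finset.card_univ, Fintype.card_fin, habs] at this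
      exact this
    have h2 : (∑ a : Fin m, (Z (a:ℕ) ω ^ h)^2)^2 ≤ (m:ℝ) * ∑ a : Fin m, ((Z (a:ℕ) ω ^ h)^2)^2 := by
      have := sq_sum_le_card_mul_sum_sq (s := Finset.univ) (f := fun a : Fin m => (Z (a:ℕ) ω ^ h)^2)
      simp only [Finset.card_univ, Fintype.card_fin] at this
      exact this
    have h3 : ∀ a : Fin m, ((Z (a:ℕ) ω ^ h)^2)^2 = Z (a:ℕ) ω ^ (4*h) := by
      intro a; rw [← pow_mul, ← pow_mul]; ring_nf
    have h4 : S ω ^ 4 = (S ω^2)^2 := by ring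
    have h5 : (S ω^2)^2 ≤ ((m:ℝ) * ∑ a : Fin m, (Z (a:ℕ) ω ^ h)^2)^2 := by
      apply pow_le_pow_left₀ (by positivity) h1
    simp only [h3] at h2
    calc S ω^4 = (S ω^2)^2 := h4
      _ ≤ ((m:ℝ) * ∑ a : Fin m, (Z (a:ℕ) ω ^ h)^2)^2 := h5
      _ = (m:ℝ)^2 * (∑ a : Fin m, (Z (a:ℕ) ω ^ h)^2)^2 := by ring
      _ ≤ (m:ℝ)^2 * ((m:ℝ) * ∑ a : Fin m, Z (a:ℕ) ω ^ (4*h)) :=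
          mul_le_mul_of_nonneg_left h2 (by positivity)
      _ = (m:ℝ)^3 * ∑ a : Fin m, Z (a:ℕ) ω ^ (4*h) := by ring
  have hint4h : Integrable (fun ω => ∑ a : Fin m, Z (a:ℕ) ω ^ (4*h)) ℙ :=
    integrable_finset_sum _ (fun a _ => hZint a (4*h) le_rfl)
  have hD4int : Integrable (fun ω => D ω^4) ℙ := by
    apply Integrable.mono' ((hint4h.const_mul ((m:ℝ)^3*128)).add (integrable_const (8*(1+|α h|)^4)))
    · exact (measD.pow_const 4).aestronglyMeasurable
    · apply ae_of_all
      intro ω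
      rw [Real.norm_eq_abs, abs_of_nonneg (by positivity : (0:ℝ) ≤ D ω^4)]
      have h1 : D ω^4 ≤ 8*(1+|α h|)^4 + 8*(2*S ω)^4 := by
        rw [hDdef]; exact add_pow_four_le' _ _
      have h2 : (2*S ω)^4 = 16*S ω^4 := by ring
      have h3 := hS4 ω
      simp only [Pi.add_apply]
      nlinarith
  -- master integrability
  have integD : ∀ (c : ℝ) (f : Ω → ℝ), Measurable f → (∀ ω, |f ω| ≤ c * D ω^4) →
      Integrable f ℙ := by
    intro c f mf hb
    apply Integrable.mono' (hD4int.const_mul c) mf.aestronglyMeasurable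
    exact ae_of_all _ (fun ω => by rw [Real.norm_eq_abs]; exact hb ω)
  have habs4 : ∀ (a b c' d e : ℝ), 0 ≤ e → |a| ≤ e → |b| ≤ e → |c'| ≤ e → |d| ≤ e →
      |a*b*c'*d| ≤ e^4 := by
    intro a b c' d e he ha hb hc hd
    calc |a*b*c'*d| = |a| * |b| * |c'| * |d| := by rw [abs_mul, abs_mul, abs_mul]
      _ ≤ e*e*e*e := by
          apply mul_le_mul (mul_le_mul (mul_le_mul ha hb (abs_nonneg _) he) hc (abs_nonneg _)
            (by positivity)) hd (abs_nonneg _) (by positivity)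
      _ = e^4 := by ring
  have intProd : ∀ (F : Fin 4 → Ω → ℝ), (∀ i, Measurable (F i)) → (∀ i ω, |F i ω| ≤ D ω) →
      Integrable (fun ω => ∏ i, F i ω) ℙ := by
    intro F mF bF
    have he : (fun ω => ∏ i, F i ω) = fun ω => F 0 ω * F 1 ω * F 2 ω * F 3 ω := by
      funext ω; exact Fin.prod_univ_four _
    rw [he]
    refine integD 1 _ ((((mF 0).mul (mF 1)).mul (mF 2)).mul (mF 3)) (fun ω => ?_)
    rw [one_mul]
    exact habs4 _ _ _ _ _ (hD0 ω) (bF 0 ω) (bF 1 ω) (bF 2 ω) (bF 3 ω)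
  letI instB : ∀ (x : Fin m ⊕ Fin m),
      MeasurableSpace (Sum.elim (fun _ : Fin m => Fin m) (fun _ : Fin m => ℝ) x) :=
    fun x => by cases x <;> simp only [Sum.elim_inl, Sum.elim_inr] <;> infer_instance
  -- independence base
  have base := fun (S₁ T₁ : Finset (Fin m ⊕ Fin m)) (hd : Disjoint S₁ T₁) =>
    (hindep m).indepFun_finset S₁ T₁ hd (by
      intro t
      cases t with
      | inl j => exact hσmeas m j
      | inr j => exact hZmeas j)
  -- integral of W is zero
  have hWint0 : ∀ a : Fin m, ∫ ω, W a ω ∂ℙ = 0 := by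
    intro a
    have he : ∫ ω, (Z (a:ℕ) ω ^ h - α h) ∂ℙ
        = (∫ ω, Z (a:ℕ) ω ^ h ∂ℙ) - ∫ _, (α h : ℝ) ∂ℙ :=
      integral_sub (hZint _ h h4h) (integrable_const _)
    rw [hWdef]
    simp only []
    rw [he, hZmom (a:ℕ) h h4h, integral_const]
    simp
  -- zero lemma for W tuples with a single index
  have Wzero : ∀ t : Fin 4 → Fin m, (∃ i, ∀ i', t i' = t i → i' = i) →
      ∫ ω, ∏ i, W (t i) ω ∂ℙ = 0 := by
    rintro t ⟨i₀, hi₀⟩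
    set R : Ω → ℝ := fun ω => ∏ i ∈ (Finset.univ.erase i₀).attach, W (t i.1) ω with hRdef
    have measR : Measurable R := by
      rw [hRdef]
      exact Finset.measurable_prod _ (fun i _ => measW (t i.1))
    set T₁ : Finset (Fin m ⊕ Fin m) := (Finset.univ.erase i₀).image (fun i => Sum.inr (t i))
      with hT₁
    have hdisj : Disjoint ({Sum.inr (t i₀)} : Finset (Fin m ⊕ Fin m)) T₁ := by
      rw [Finset.disjoint_left]
      intro x hx hxT
      rw [Finset.mem_singleton] at hx
      subst hx
      rw [hT₁, Finset.mem_image] at hxT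
      obtain ⟨i, hi, hieq⟩ := hxT
      rw [Finset.mem_erase] at hi
      exact hi.1 (hi₀ i (Sum.inr.inj hieq))
    have hmemT : ∀ i : {x // x ∈ Finset.univ.erase i₀}, Sum.inr (t i.1) ∈ T₁ := fun i => by
      rw [hT₁]; exact Finset.mem_image_of_mem _ i.2
    have hIndep : IndepFun (W (t i₀)) R ℙ := by
      have hb := base {Sum.inr (t i₀)} T₁ hdisj
      have := hb.comp
        (φ := fun v => (id (v ⟨Sum.inr (t i₀), Finset.mem_singleton_self _⟩) : ℝ)^h - α h)
        (ψ := fun v => ∏ i ∈ (Finset.univ.erase i₀).attach,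
          ((id (v ⟨Sum.inr (t i.1), hmemT i⟩) : ℝ)^h - α h))
        (by
          refine Measurable.sub_const ?_ _
          refine Measurable.pow_const ?_ _
          exact measurable_pi_apply _)
        (by
          refine Finset.measurable_prod _ (fun i _ => ?_)
          refine Measurable.sub_const ?_ _
          refine Measurable.pow_const ?_ _
          exact measurable_pi_apply _)
      exact this
    have hsplit : ∀ ω, ∏ i, W (t i) ω = W (t i₀) ω * R ω := by
      intro ω
      show ∏ i, W (t i) ω = W (t i₀) ω * ∏ i ∈ (Finset.univ.erase i₀).attach, W (t i.1) ω
      rw [Finset.prod_attach ((Finset.univ.erase i₀)) (fun i => W (t i) ω)]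
      exact (Finset.mul_prod_erase Finset.univ _ (Finset.mem_univ i₀)).symm
    calc ∫ ω, ∏ i, W (t i) ω ∂ℙ = ∫ ω, W (t i₀) ω * R ω ∂ℙ := by
          apply integral_congr_ae
          exact ae_of_all _ hsplit
      _ = (∫ ω, W (t i₀) ω ∂ℙ) * ∫ ω, R ω ∂ℙ :=
          IndepFun.integral_fun_mul_eq_mul_integral hIndep (measW _).aestronglyMeasurable measR.aestronglyMeasurable
      _ = 0 := by rw [hWint0]; ring
  -- the family, named
  set Xf : ∀ x : Fin m ⊕ Fin m, Ω → Sum.elim (fun _ : Fin m => Fin m) (fun _ : Fin m => ℝ) x :=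
    fun x => match x with
      | Sum.inl k => σ m k
      | Sum.inr k => Z (k:ℕ) with hXf
  have measXf : ∀ x, Measurable (Xf x) := by
    intro x
    cases x with
    | inl k => exact hσmeas m k
    | inr k => exact hZmeas k
  have hmemRj : ∀ (j b : Fin m), Sum.inr b ∈ ({Sum.inl j} : Finset (Fin m ⊕ Fin m))ᶜ :=
    fun j b => by simp
  -- averaging over one resampling index
  have helperB : ∀ (j a : Fin m)
      (ψ : (∀ x : {x // x ∈ ({Sum.inl j} : Finset (Fin m ⊕ Fin m))ᶜ},
        Sum.elim (fun _ : Fin m => Fin m) (fun _ : Fin m => ℝ) x.1) → ℝ),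
      Measurable ψ →
      (∫ ω, (if σ m j ω = a then (1:ℝ) else 0) * ψ (fun x => Xf x.1 ω) ∂ℙ)
      = (m:ℝ)⁻¹ * ∫ ω, ψ (fun x => Xf x.1 ω) ∂ℙ := by
    intro j a ψ hψ
    have hb := base {Sum.inl j} ({Sum.inl j} : Finset (Fin m ⊕ Fin m))ᶜ disjoint_compl_right
    have hφm : Measurable (fun v : (∀ x : {x // x ∈ ({Sum.inl j} : Finset (Fin m ⊕ Fin m))},
        Sum.elim (fun _ : Fin m => Fin m) (fun _ : Fin m => ℝ) x.1) =>
          if (id (v ⟨Sum.inl j, Finset.mem_singleton_self _⟩) : Fin m) = a then (1:ℝ) else 0) := by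
      have hev : Measurable (fun v : (∀ x : {x // x ∈ ({Sum.inl j} : Finset (Fin m ⊕ Fin m))},
          Sum.elim (fun _ : Fin m => Fin m) (fun _ : Fin m => ℝ) x.1) =>
            (id (v ⟨Sum.inl j, Finset.mem_singleton_self _⟩) : Fin m)) := measurable_pi_apply _
      refine Measurable.ite ?_ measurable_const measurable_const
      exact hev (measurableSet_singleton a)
    have hI := hb.comp hφm hψ
    have hTupMeas : Measurable (fun ω => (fun x : {x // x ∈ ({Sum.inl j} :
        Finset (Fin m ⊕ Fin m))ᶜ} => Xf x.1 ω)) :=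
      measurable_pi_lambda _ (fun x => measXf x.1)
    have heq : ∫ ω, (if σ m j ω = a then (1:ℝ) else 0) * ψ (fun x => Xf x.1 ω) ∂ℙ
        = (∫ ω, (if σ m j ω = a then (1:ℝ) else 0) ∂ℙ) * ∫ ω, ψ (fun x => Xf x.1 ω) ∂ℙ :=
      IndepFun.integral_fun_mul_eq_mul_integral hI
        ((Measurable.ite (hσmeas m j (measurableSet_singleton a)) measurable_const
          measurable_const).aestronglyMeasurable)
        ((hψ.comp hTupMeas).aestronglyMeasurable)
    have hind_int : ∫ ω, (if σ m j ω = a then (1:ℝ) else 0) ∂ℙ = (m:ℝ)⁻¹ := by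
      have hset : MeasurableSet {ω | σ m j ω = a} := hσmeas m j (measurableSet_singleton a)
      have hieq : (fun ω => if σ m j ω = a then (1:ℝ) else 0)
          = Set.indicator {ω | σ m j ω = a} (fun _ => (1:ℝ)) := by
        funext ω
        by_cases hc : σ m j ω = a <;>
          simp [Set.indicator_apply, Set.mem_setOf_eq, hc]
      rw [hieq, integral_indicator_const _ hset, measureReal_def, hσunif m j a]
      simp
    rw [heq, hind_int]
  -- |Z_a^h - bar| ≤ D
  have hZBD : ∀ (a : Fin m) ω, |Z (a:ℕ) ω ^ h - bar ω| ≤ D ω := by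
    intro a ω
    have h1 := hZaS a ω; have h2 := hbarS' ω; have h3 := hS0 ω
    calc |Z (a:ℕ) ω ^ h - bar ω| ≤ |Z (a:ℕ) ω ^ h| + |bar ω| := abs_sub _ _
      _ ≤ D ω := by simp only [hDdef]; linarith [abs_nonneg (α h)]
  -- zero lemma for U tuples with a single index
  have Uzero : ∀ t : Fin 4 → Fin m, (∃ i, ∀ i', t i' = t i → i' = i) →
      ∫ ω, ∏ i, U (t i) ω ∂ℙ = 0 := by
    rintro t ⟨i₀, hi₀⟩
    set j := t i₀ with hj
    set R : Ω → ℝ := fun ω => ∏ i ∈ (Finset.univ.erase i₀).attach, U (t i.1) ω with hRdef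
    have measR : Measurable R := by
      rw [hRdef]
      exact Finset.measurable_prod _ (fun i _ => measU (t i.1))
    have hR3 : ∀ ω, |R ω| ≤ D ω^3 := by
      intro ω
      rw [hRdef]
      calc |∏ i ∈ (Finset.univ.erase i₀).attach, U (t i.1) ω|
          = ∏ i ∈ (Finset.univ.erase i₀).attach, |U (t i.1) ω| := Finset.abs_prod _ _
        _ ≤ ∏ _i ∈ (Finset.univ.erase i₀).attach, D ω :=
            Finset.prod_le_prod (fun _ _ => abs_nonneg _) (fun i _ => hUD _ ω)
        _ = D ω ^ 3 := by
            rw [Finset.prod_const, Finset.card_attach,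
              Finset.card_erase_of_mem (Finset.mem_univ _)]
            norm_num
    have hmemL : ∀ i : {x // x ∈ Finset.univ.erase i₀},
        Sum.inl (t i.1) ∈ ({Sum.inl j} : Finset (Fin m ⊕ Fin m))ᶜ := by
      intro i
      simp only [Finset.mem_compl, Finset.mem_singleton]
      intro hcon
      exact (Finset.mem_erase.1 i.2).1 (hi₀ i.1 ((Sum.inl.inj hcon).trans hj))
    -- ψ-level functions
    set barψ : (∀ x : {x // x ∈ ({Sum.inl j} : Finset (Fin m ⊕ Fin m))ᶜ},
        Sum.elim (fun _ : Fin m => Fin m) (fun _ : Fin m => ℝ) x.1) → ℝ :=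
      fun v => (m:ℝ)⁻¹ * ∑ b : Fin m, (id (v ⟨Sum.inr b, hmemRj j b⟩) : ℝ)^h with hbarψ
    have measbarψ : Measurable barψ := by
      rw [hbarψ]
      refine Measurable.const_mul ?_ _
      refine Finset.measurable_sum _ (fun b _ => ?_)
      refine Measurable.pow_const ?_ _
      exact measurable_pi_apply _
    set ψR : (∀ x : {x // x ∈ ({Sum.inl j} : Finset (Fin m ⊕ Fin m))ᶜ},
        Sum.elim (fun _ : Fin m => Fin m) (fun _ : Fin m => ℝ) x.1) → ℝ :=
      fun v => ∏ i ∈ (Finset.univ.erase i₀).attach,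
        ((∑ b : Fin m, if (id (v ⟨Sum.inl (t i.1), hmemL i⟩) : Fin m) = b
          then (id (v ⟨Sum.inr b, hmemRj j b⟩) : ℝ)^h else 0) - barψ v) with hψR
    have measψR : Measurable ψR := by
      rw [hψR]
      refine Finset.measurable_prod _ (fun i _ => ?_)
      refine Measurable.sub ?_ measbarψ
      refine Finset.measurable_sum _ (fun b _ => ?_)
      have hev : Measurable (fun v : (∀ x : {x // x ∈ ({Sum.inl j} :
          Finset (Fin m ⊕ Fin m))ᶜ},
          Sum.elim (fun _ : Fin m => Fin m) (fun _ : Fin m => ℝ) x.1) =>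
            (id (v ⟨Sum.inl (t i.1), hmemL i⟩) : Fin m)) := measurable_pi_apply _
      refine Measurable.ite ?_ ?_ measurable_const
      · exact hev (measurableSet_singleton b)
      · refine Measurable.pow_const ?_ _
        exact measurable_pi_apply _
    set ψa : Fin m → (∀ x : {x // x ∈ ({Sum.inl j} : Finset (Fin m ⊕ Fin m))ᶜ},
        Sum.elim (fun _ : Fin m => Fin m) (fun _ : Fin m => ℝ) x.1) → ℝ :=
      fun a v => ((id (v ⟨Sum.inr a, hmemRj j a⟩) : ℝ)^h - barψ v) * ψR v with hψa
    have measψa : ∀ a, Measurable (ψa a) := by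
      intro a
      rw [hψa]
      refine Measurable.mul (Measurable.sub ?_ measbarψ) measψR
      refine Measurable.pow_const ?_ _
      exact measurable_pi_apply _
    -- pointwise identifications
    have hψR_eq : ∀ ω, ψR (fun x => Xf x.1 ω) = R ω := by
      intro ω
      rw [hψR, hRdef]
      refine Finset.prod_congr rfl (fun i _ => ?_)
      have h1 : (∑ b : Fin m, if (id ((fun x : {x // x ∈ ({Sum.inl j} :
          Finset (Fin m ⊕ Fin m))ᶜ} => Xf x.1 ω) ⟨Sum.inl (t i.1), hmemL i⟩) : Fin m) = b
          then (id ((fun x : {x // x ∈ ({Sum.inl j} :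
            Finset (Fin m ⊕ Fin m))ᶜ} => Xf x.1 ω) ⟨Sum.inr b, hmemRj j b⟩) : ℝ)^h else 0)
          = Z ((σ m (t i.1) ω) : ℕ) ω ^ h := by
        show (∑ b : Fin m, if σ m (t i.1) ω = b then Z (b:ℕ) ω ^ h else 0) = _
        rw [Finset.sum_ite_eq Finset.univ (σ m (t i.1) ω) (fun b => Z (b:ℕ) ω ^ h),
          if_pos (Finset.mem_univ _)]
      rw [h1]
      rfl
    have hψa_eq : ∀ (a : Fin m) ω, ψa a (fun x => Xf x.1 ω)
        = (Z (a:ℕ) ω ^ h - bar ω) * R ω := by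
      intro a ω
      rw [hψa]
      simp only []
      rw [hψR_eq ω]
      rfl
    -- split the product
    have hsplit : ∀ ω, ∏ i, U (t i) ω = U j ω * R ω := by
      intro ω
      show ∏ i, U (t i) ω = U j ω * ∏ i ∈ (Finset.univ.erase i₀).attach, U (t i.1) ω
      rw [Finset.prod_attach ((Finset.univ.erase i₀)) (fun i => U (t i) ω)]
      exact (Finset.mul_prod_erase Finset.univ _ (Finset.mem_univ i₀)).symm
    -- express as a sum over the value of σ j
    have hsum : ∀ ω, U j ω * R ω
        = ∑ a : Fin m, (if σ m j ω = a then (1:ℝ) else 0) * ψa a (fun x => Xf x.1 ω) := by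
      intro ω
      have : ∀ a : Fin m, (if σ m j ω = a then (1:ℝ) else 0) * ψa a (fun x => Xf x.1 ω)
          = if σ m j ω = a then ((Z (a:ℕ) ω ^ h - bar ω) * R ω) else 0 := by
        intro a
        rw [hψa_eq a ω, ite_mul, one_mul, zero_mul]
      rw [Finset.sum_congr rfl (fun a _ => this a)]
      rw [Finset.sum_ite_eq Finset.univ (σ m j ω)
        (fun a => (Z (a:ℕ) ω ^ h - bar ω) * R ω), if_pos (Finset.mem_univ _)]
    -- integrability of each summand
    have hsummand_int : ∀ a : Fin m, Integrable
        (fun ω => (if σ m j ω = a then (1:ℝ) else 0) * ψa a (fun x => Xf x.1 ω)) ℙ := by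
      intro a
      have hmeas : Measurable
          (fun ω => (if σ m j ω = a then (1:ℝ) else 0) * ψa a (fun x => Xf x.1 ω)) := by
        refine Measurable.mul ?_ ?_
        · exact Measurable.ite (hσmeas m j (measurableSet_singleton a)) measurable_const
            measurable_const
        · exact (measψa a).comp (measurable_pi_lambda _ (fun x => measXf x.1))
      refine integD 1 _ hmeas (fun ω => ?_)
      rw [one_mul, abs_mul, hψa_eq a ω, abs_mul]
      have e1 : |if σ m j ω = a then (1:ℝ) else 0| ≤ 1 := by
        by_cases hc : σ m j ω = a <;> simp [hc]
      have e2 := hZBD a ω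
      have e3 := hR3 ω
      have e4 := hD0 ω
      have e5 : |Z (a:ℕ) ω ^ h - bar ω| * |R ω| ≤ D ω * D ω^3 := by
        apply mul_le_mul e2 e3 (abs_nonneg _) e4
      calc |if σ m j ω = a then (1:ℝ) else 0| * (|Z (a:ℕ) ω ^ h - bar ω| * |R ω|)
          ≤ 1 * (D ω * D ω^3) := by
            apply mul_le_mul e1 e5 (by positivity) one_pos.le
        _ = D ω^4 := by ring
    have hψa_int : ∀ a : Fin m, Integrable (fun ω => ψa a (fun x => Xf x.1 ω)) ℙ := by
      intro a
      have hmeas : Measurable (fun ω => ψa a (fun x => Xf x.1 ω)) :=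
        (measψa a).comp (measurable_pi_lambda _ (fun x => measXf x.1))
      refine integD 1 _ hmeas (fun ω => ?_)
      rw [one_mul, hψa_eq a ω, abs_mul]
      have e2 := hZBD a ω
      have e3 := hR3 ω
      have e4 := hD0 ω
      calc |Z (a:ℕ) ω ^ h - bar ω| * |R ω| ≤ D ω * D ω^3 :=
            mul_le_mul e2 e3 (abs_nonneg _) e4
        _ ≤ D ω^4 := by nlinarith [hD1 ω]
    -- the computation
    calc ∫ ω, ∏ i, U (t i) ω ∂ℙ
        = ∫ ω, ∑ a : Fin m, (if σ m j ω = a then (1:ℝ) else 0)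
            * ψa a (fun x => Xf x.1 ω) ∂ℙ := by
          apply integral_congr_ae
          exact ae_of_all _ (fun ω => (hsplit ω).trans (hsum ω))
      _ = ∑ a : Fin m, ∫ ω, (if σ m j ω = a then (1:ℝ) else 0)
            * ψa a (fun x => Xf x.1 ω) ∂ℙ :=
          integral_finset_sum _ (fun a _ => hsummand_int a)
      _ = ∑ a : Fin m, (m:ℝ)⁻¹ * ∫ ω, ψa a (fun x => Xf x.1 ω) ∂ℙ :=
          Finset.sum_congr rfl (fun a _ => helperB j a (ψa a) (measψa a))
      _ = (m:ℝ)⁻¹ * ∫ ω, ∑ a : Fin m, ψa a (fun x => Xf x.1 ω) ∂ℙ := by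
          rw [integral_finset_sum _ (fun a _ => hψa_int a), Finset.mul_sum]
      _ = 0 := by
          have hz : ∀ ω, ∑ a : Fin m, ψa a (fun x => Xf x.1 ω) = 0 := by
            intro ω
            rw [Finset.sum_congr rfl (fun a _ => hψa_eq a ω), ← Finset.sum_mul]
            have : ∑ a : Fin m, (Z (a:ℕ) ω ^ h - bar ω) = 0 := by
              rw [Finset.sum_sub_distrib, Finset.sum_const, Finset.card_univ,
                Fintype.card_fin, nsmul_eq_mul, hbardef]
              field_simp
              ring
            rw [this, zero_mul]
          rw [integral_congr_ae (ae_of_all _ hz)]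
          simp
  have hSD : ∀ ω, S ω ≤ D ω := fun ω => by
    simp only [hDdef]; linarith [hS0 ω, abs_nonneg (α h)]
  -- fourth moment of Z(σ j)^h
  have hZσ4 : ∀ j : Fin m, ∫ ω, (Z ((σ m j ω):ℕ) ω ^ h)^4 ∂ℙ = c4 := by
    intro j
    set ψ4 : Fin m → (∀ x : {x // x ∈ ({Sum.inl j} : Finset (Fin m ⊕ Fin m))ᶜ},
        Sum.elim (fun _ : Fin m => Fin m) (fun _ : Fin m => ℝ) x.1) → ℝ :=
      fun a v => ((id (v ⟨Sum.inr a, hmemRj j a⟩) : ℝ)^h)^4 with hψ4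
    have measψ4 : ∀ a, Measurable (ψ4 a) := by
      intro a
      rw [hψ4]
      refine Measurable.pow_const (Measurable.pow_const ?_ _) _
      exact measurable_pi_apply _
    have hid : ∀ ω, (Z ((σ m j ω):ℕ) ω ^ h)^4
        = ∑ a : Fin m, (if σ m j ω = a then (1:ℝ) else 0) * ψ4 a (fun x => Xf x.1 ω) := by
      intro ω
      have hterm : ∀ a : Fin m, (if σ m j ω = a then (1:ℝ) else 0) * ψ4 a (fun x => Xf x.1 ω)
          = if σ m j ω = a then (Z (a:ℕ) ω ^ h)^4 else 0 := by
        intro a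
        rw [ite_mul, one_mul, zero_mul]
        rfl
      rw [Finset.sum_congr rfl (fun a _ => hterm a)]
      rw [Finset.sum_ite_eq Finset.univ (σ m j ω) (fun a => (Z (a:ℕ) ω ^ h)^4),
        if_pos (Finset.mem_univ _)]
    have hsummand_int : ∀ a : Fin m, Integrable
        (fun ω => (if σ m j ω = a then (1:ℝ) else 0) * ψ4 a (fun x => Xf x.1 ω)) ℙ := by
      intro a
      have hmeas : Measurable
          (fun ω => (if σ m j ω = a then (1:ℝ) else 0) * ψ4 a (fun x => Xf x.1 ω)) := by
        refine Measurable.mul ?_ ?_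
        · exact Measurable.ite (hσmeas m j (measurableSet_singleton a)) measurable_const
            measurable_const
        · exact (measψ4 a).comp (measurable_pi_lambda _ (fun x => measXf x.1))
      refine integD 1 _ hmeas (fun ω => ?_)
      rw [one_mul, abs_mul]
      have e1 : |if σ m j ω = a then (1:ℝ) else 0| ≤ 1 := by
        by_cases hc : σ m j ω = a <;> simp [hc]
      have e2 : |ψ4 a (fun x => Xf x.1 ω)| ≤ D ω^4 := by
        show |(Z (a:ℕ) ω ^ h)^4| ≤ D ω^4
        rw [abs_pow]
        exact pow_le_pow_left₀ (abs_nonneg _) ((hZaS a ω).trans (hSD ω)) 4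
      calc |if σ m j ω = a then (1:ℝ) else 0| * |ψ4 a (fun x => Xf x.1 ω)|
          ≤ 1 * (D ω^4) := mul_le_mul e1 e2 (abs_nonneg _) one_pos.le
        _ = D ω^4 := one_mul _
    have hψ4_int : ∀ a : Fin m, ∫ ω, ψ4 a (fun x => Xf x.1 ω) ∂ℙ = c4 := by
      intro a
      have he : (fun ω => ψ4 a (fun x => Xf x.1 ω)) = fun ω => Z (a:ℕ) ω ^ (4*h) := by
        funext ω
        show (Z (a:ℕ) ω ^ h)^4 = _
        rw [hpow4]
      rw [he, hZmom (a:ℕ) (4*h) le_rfl, hc4def]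
    calc ∫ ω, (Z ((σ m j ω):ℕ) ω ^ h)^4 ∂ℙ
        = ∫ ω, ∑ a : Fin m, (if σ m j ω = a then (1:ℝ) else 0)
            * ψ4 a (fun x => Xf x.1 ω) ∂ℙ := integral_congr_ae (ae_of_all _ hid)
      _ = ∑ a : Fin m, ∫ ω, (if σ m j ω = a then (1:ℝ) else 0)
            * ψ4 a (fun x => Xf x.1 ω) ∂ℙ := integral_finset_sum _ (fun a _ => hsummand_int a)
      _ = ∑ a : Fin m, (m:ℝ)⁻¹ * ∫ ω, ψ4 a (fun x => Xf x.1 ω) ∂ℙ :=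
          Finset.sum_congr rfl (fun a _ => helperB j a (ψ4 a) (measψ4 a))
      _ = ∑ _a : Fin m, (m:ℝ)⁻¹ * c4 := Finset.sum_congr rfl (fun a _ => by rw [hψ4_int a])
      _ = c4 := by
          rw [Finset.sum_const, Finset.card_univ, Fintype.card_fin, nsmul_eq_mul]
          field_simp
  -- integral of bar^4
  have hbar4int : Integrable (fun ω => bar ω^4) ℙ := by
    refine integD 1 _ (measbar.pow_const 4) (fun ω => ?_)
    rw [one_mul, abs_pow]
    exact pow_le_pow_left₀ (abs_nonneg _) ((hbarS' ω).trans (hSD ω)) 4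
  have hbar4 : ∫ ω, bar ω^4 ∂ℙ ≤ c4 := by
    have hb : ∀ ω, bar ω^4 ≤ (m:ℝ)⁻¹ * ∑ a : Fin m, Z (a:ℕ) ω ^ (4*h) := by
      intro ω
      calc bar ω^4 = |bar ω|^4 := by
            rw [← abs_pow]
            exact (abs_of_nonneg (by positivity : (0:ℝ) ≤ bar ω^4)).symm
        _ ≤ ((m:ℝ)⁻¹ * S ω)^4 := pow_le_pow_left₀ (abs_nonneg _) (hbarS ω) 4
        _ = ((m:ℝ)⁻¹)^4 * S ω^4 := by rw [mul_pow]
        _ ≤ ((m:ℝ)⁻¹)^4 * ((m:ℝ)^3 * ∑ a : Fin m, Z (a:ℕ) ω ^ (4*h)) :=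
            mul_le_mul_of_nonneg_left (hS4 ω) (by positivity)
        _ = (m:ℝ)⁻¹ * ∑ a : Fin m, Z (a:ℕ) ω ^ (4*h) := by
            field_simp
    calc ∫ ω, bar ω^4 ∂ℙ ≤ ∫ ω, (m:ℝ)⁻¹ * ∑ a : Fin m, Z (a:ℕ) ω ^ (4*h) ∂ℙ :=
          integral_mono hbar4int (hint4h.const_mul _) hb
      _ = (m:ℝ)⁻¹ * ∑ a : Fin m, ∫ ω, Z (a:ℕ) ω ^ (4*h) ∂ℙ := by
          rw [integral_const_mul _ _,
            integral_finset_sum _ (fun (a : Fin m) _ => hZint (a:ℕ) (4*h) le_rfl)]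
      _ = (m:ℝ)⁻¹ * ∑ _a : Fin m, c4 := by
          rw [Finset.sum_congr rfl
            (fun (a : Fin m) _ => (hZmom (a:ℕ) (4*h) le_rfl).trans hc4def.symm)]
      _ = c4 := by
          rw [Finset.sum_const, Finset.card_univ, Fintype.card_fin, nsmul_eq_mul]
          field_simp
  -- fourth moments of U and W
  have hU4int : ∀ j : Fin m, Integrable (fun ω => U j ω^4) ℙ := by
    intro j
    refine integD 1 _ ((measU j).pow_const 4) (fun ω => ?_)
    rw [one_mul, abs_pow]
    exact pow_le_pow_left₀ (abs_nonneg _) (hUD j ω) 4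
  have hW4int : ∀ a : Fin m, Integrable (fun ω => W a ω^4) ℙ := by
    intro a
    refine integD 1 _ ((measW a).pow_const 4) (fun ω => ?_)
    rw [one_mul, abs_pow]
    exact pow_le_pow_left₀ (abs_nonneg _) (hWD a ω) 4
  have hZσ4int : ∀ j : Fin m, Integrable (fun ω => (Z ((σ m j ω):ℕ) ω ^ h)^4) ℙ := by
    intro j
    refine integD 1 _ ((measZσ j).pow_const 4) (fun ω => ?_)
    rw [one_mul, abs_pow]
    exact pow_le_pow_left₀ (abs_nonneg _) ((hZσS j ω).trans (hSD ω)) 4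
  have hU4 : ∀ j : Fin m, ∫ ω, U j ω^4 ∂ℙ ≤ K2 := by
    intro j
    have hpt : ∀ ω, U j ω^4 ≤ 8*(Z ((σ m j ω):ℕ) ω ^ h)^4 + 8*bar ω^4 :=
      fun ω => sub_pow_four_le' _ _
    calc ∫ ω, U j ω^4 ∂ℙ ≤ ∫ ω, (8*(Z ((σ m j ω):ℕ) ω ^ h)^4 + 8*bar ω^4) ∂ℙ :=
          integral_mono (hU4int j) (((hZσ4int j).const_mul 8).add (hbar4int.const_mul 8)) hpt
      _ = 8*(∫ ω, (Z ((σ m j ω):ℕ) ω ^ h)^4 ∂ℙ) + 8*∫ ω, bar ω^4 ∂ℙ := by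
          rw [integral_add ((hZσ4int j).const_mul 8) (hbar4int.const_mul 8),
            integral_const_mul _ _, integral_const_mul _ _]
      _ ≤ K2 := by
          rw [hZσ4 j, hK2def]
          linarith [hbar4]
  have hW4 : ∀ a : Fin m, ∫ ω, W a ω^4 ∂ℙ ≤ K1 := by
    intro a
    have hpt : ∀ ω, W a ω^4 ≤ 8*(Z (a:ℕ) ω ^ h)^4 + 8*(α h)^4 :=
      fun ω => sub_pow_four_le' _ _
    have hZa4int : Integrable (fun ω => (Z (a:ℕ) ω ^ h)^4) ℙ := by
      refine integD 1 _ (((hZmeas (a:ℕ)).pow_const h).pow_const 4) (fun ω => ?_)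
      rw [one_mul, abs_pow]
      exact pow_le_pow_left₀ (abs_nonneg _) ((hZaS a ω).trans (hSD ω)) 4
    have hZa4 : ∫ ω, (Z (a:ℕ) ω ^ h)^4 ∂ℙ = c4 := by
      have he : (fun ω => (Z (a:ℕ) ω ^ h)^4) = fun ω => Z (a:ℕ) ω ^ (4*h) := by
        funext ω; rw [hpow4]
      rw [he, hZmom (a:ℕ) (4*h) le_rfl, hc4def]
    calc ∫ ω, W a ω^4 ∂ℙ ≤ ∫ ω, (8*(Z (a:ℕ) ω ^ h)^4 + 8*(α h)^4) ∂ℙ :=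
          integral_mono (hW4int a) ((hZa4int.const_mul 8).add (integrable_const _)) hpt
      _ = 8*(∫ ω, (Z (a:ℕ) ω ^ h)^4 ∂ℙ) + 8*(α h)^4 := by
          rw [integral_add (hZa4int.const_mul 8) (integrable_const _), integral_const_mul _ _]
          simp
      _ ≤ K1 := by
          rw [hZa4, hK1def]
  -- tuple-level integrability and bounds
  have hintW : ∀ t : Fin 4 → Fin m, Integrable (fun ω => ∏ i, W (t i) ω) ℙ :=
    fun t => intProd _ (fun i => measW (t i)) (fun i ω => hWD (t i) ω)
  have hintU : ∀ t : Fin 4 → Fin m, Integrable (fun ω => ∏ i, U (t i) ω) ℙ :=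
    fun t => intProd _ (fun i => measU (t i)) (fun i ω => hUD (t i) ω)
  have hbound : ∀ (V : Fin m → Ω → ℝ) (KK : ℝ),
      (∀ a, Measurable (V a)) → (∀ a ω, |V a ω| ≤ D ω) →
      (∀ a, Integrable (fun ω => V a ω^4) ℙ) → (∀ a, ∫ ω, V a ω^4 ∂ℙ ≤ KK) →
      ∀ t : Fin 4 → Fin m, |∫ ω, ∏ i, V (t i) ω ∂ℙ| ≤ KK := by
    intro V KK mV bV iV4 hV4 t
    have hintV : Integrable (fun ω => ∏ i, V (t i) ω) ℙ :=
      intProd _ (fun i => mV (t i)) (fun i ω => bV (t i) ω)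
    have h1 : |∫ ω, ∏ i, V (t i) ω ∂ℙ| ≤ ∫ ω, |∏ i, V (t i) ω| ∂ℙ := by
      simpa only [Real.norm_eq_abs] using
        norm_integral_le_integral_norm (μ := ℙ) (fun ω => ∏ i, V (t i) ω)
    have hintRHS : Integrable (fun ω => (∑ i : Fin 4, V (t i) ω^4)/4) ℙ :=
      (integrable_finset_sum _ (fun (i : Fin 4) _ => iV4 (t i))).div_const 4
    have h2 : ∫ ω, |∏ i, V (t i) ω| ∂ℙ ≤ ∫ ω, (∑ i : Fin 4, V (t i) ω^4)/4 ∂ℙ := by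
      refine integral_mono hintV.abs hintRHS (fun ω => ?_)
      rw [Fin.prod_univ_four (fun i => V (t i) ω), Fin.sum_univ_four (fun i => V (t i) ω^4)]
      exact abs_mul4_le' _ _ _ _
    have h3 : ∫ ω, (∑ i : Fin 4, V (t i) ω^4)/4 ∂ℙ ≤ KK := by
      rw [integral_div, integral_finset_sum _ (fun (i : Fin 4) _ => iV4 (t i)),
        Fin.sum_univ_four (fun i => ∫ ω, V (t i) ω^4 ∂ℙ)]
      have k0 : 0 ≤ KK := le_trans (integral_nonneg (fun ω => by positivity)) (hV4 (t 0))
      linarith [hV4 (t 0), hV4 (t 1), hV4 (t 2), hV4 (t 3)]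
    exact h1.trans (h2.trans h3)
  have hKW := hbound W K1 measW hWD hW4int hW4
  have hKU := hbound U K2 measU hUD hU4int hU4
  -- abstract fourth-moment bounds
  have hWsum := fourth_moment_abs_le' W K1 hintW Wzero hKW
  have hUsum := fourth_moment_abs_le' U K2 hintU Uzero hKU
  -- decomposition
  have hdecomp : ∀ ω, ((1/(m:ℝ)) * ∑ j : Fin m, Z ((σ m j ω):ℕ) ω ^ h - α h)
      = (m:ℝ)⁻¹ * (∑ j : Fin m, U j ω) + (m:ℝ)⁻¹ * (∑ a : Fin m, W a ω) := by
    intro ω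
    rw [hUdef, hWdef]
    simp only []
    rw [Finset.sum_sub_distrib, Finset.sum_sub_distrib, Finset.sum_const, Finset.sum_const,
      Finset.card_univ, Fintype.card_fin, nsmul_eq_mul, nsmul_eq_mul, hbardef]
    field_simp
    ring
  have habsU : ∀ ω, |(m:ℝ)⁻¹ * ∑ j : Fin m, U j ω| ≤ D ω := by
    intro ω
    rw [abs_mul, abs_of_nonneg (by positivity : (0:ℝ) ≤ (m:ℝ)⁻¹)]
    have h1 : |∑ j : Fin m, U j ω| ≤ (m:ℝ) * D ω := by
      refine (Finset.abs_sum_le_sum_abs _ _).trans ?_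
      calc ∑ j : Fin m, |U j ω| ≤ ∑ _j : Fin m, D ω := Finset.sum_le_sum (fun j _ => hUD j ω)
        _ = (m:ℝ) * D ω := by
            rw [Finset.sum_const, Finset.card_univ, Fintype.card_fin, nsmul_eq_mul]
    calc (m:ℝ)⁻¹ * |∑ j : Fin m, U j ω| ≤ (m:ℝ)⁻¹ * ((m:ℝ) * D ω) :=
          mul_le_mul_of_nonneg_left h1 (by positivity)
      _ = D ω := by field_simp
  have habsW : ∀ ω, |(m:ℝ)⁻¹ * ∑ a : Fin m, W a ω| ≤ D ω := by
    intro ω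
    rw [abs_mul, abs_of_nonneg (by positivity : (0:ℝ) ≤ (m:ℝ)⁻¹)]
    have h1 : |∑ a : Fin m, W a ω| ≤ (m:ℝ) * D ω := by
      refine (Finset.abs_sum_le_sum_abs _ _).trans ?_
      calc ∑ a : Fin m, |W a ω| ≤ ∑ _a : Fin m, D ω := Finset.sum_le_sum (fun a _ => hWD a ω)
        _ = (m:ℝ) * D ω := by
            rw [Finset.sum_const, Finset.card_univ, Fintype.card_fin, nsmul_eq_mul]
    calc (m:ℝ)⁻¹ * |∑ a : Fin m, W a ω| ≤ (m:ℝ)⁻¹ * ((m:ℝ) * D ω) :=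
          mul_le_mul_of_nonneg_left h1 (by positivity)
      _ = D ω := by field_simp
  -- integrability of the pieces
  have measSU : Measurable (fun ω => (m:ℝ)⁻¹ * ∑ j : Fin m, U j ω) :=
    (Finset.measurable_sum Finset.univ (fun (j : Fin m) _ => measU j)).const_mul _
  have measSW : Measurable (fun ω => (m:ℝ)⁻¹ * ∑ a : Fin m, W a ω) :=
    (Finset.measurable_sum Finset.univ (fun (a : Fin m) _ => measW a)).const_mul _
  have hintSU4 : Integrable (fun ω => ((m:ℝ)⁻¹ * ∑ j : Fin m, U j ω)^4) ℙ := by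
    refine integD 1 _ (measSU.pow_const 4) (fun ω => ?_)
    rw [one_mul, abs_pow]
    exact pow_le_pow_left₀ (abs_nonneg _) (habsU ω) 4
  have hintSW4 : Integrable (fun ω => ((m:ℝ)⁻¹ * ∑ a : Fin m, W a ω)^4) ℙ := by
    refine integD 1 _ (measSW.pow_const 4) (fun ω => ?_)
    rw [one_mul, abs_pow]
    exact pow_le_pow_left₀ (abs_nonneg _) (habsW ω) 4
  have hintLHS : Integrable (fun ω =>
      ((m:ℝ)⁻¹ * (∑ j : Fin m, U j ω) + (m:ℝ)⁻¹ * (∑ a : Fin m, W a ω))^4) ℙ := by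
    refine integD 16 _ ((measSU.add measSW).pow_const 4) (fun ω => ?_)
    have h1 : |(m:ℝ)⁻¹ * (∑ j : Fin m, U j ω) + (m:ℝ)⁻¹ * (∑ a : Fin m, W a ω)| ≤ 2 * D ω :=
      (abs_add_le _ _).trans (by linarith [habsU ω, habsW ω])
    calc |((m:ℝ)⁻¹ * (∑ j : Fin m, U j ω) + (m:ℝ)⁻¹ * (∑ a : Fin m, W a ω))^4|
        = |(m:ℝ)⁻¹ * (∑ j : Fin m, U j ω) + (m:ℝ)⁻¹ * (∑ a : Fin m, W a ω)|^4 := abs_pow _ _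
      _ ≤ (2*D ω)^4 := pow_le_pow_left₀ (abs_nonneg _) h1 4
      _ = 16 * D ω^4 := by ring
  -- final computation
  have hsumU4 : ∫ ω, (∑ j : Fin m, U j ω)^4 ∂ℙ ≤ 16*K2*(m:ℝ)^2 :=
    le_trans (le_abs_self _) hUsum
  have hsumW4 : ∫ ω, (∑ a : Fin m, W a ω)^4 ∂ℙ ≤ 16*K1*(m:ℝ)^2 :=
    le_trans (le_abs_self _) hWsum
  have hnn : 0 ≤ ∫ ω, ((1/(m:ℝ)) * ∑ j : Fin m, Z ((σ m j ω):ℕ) ω ^ h - α h)^4 ∂ℙ :=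
    integral_nonneg (fun ω => by positivity)
  rw [abs_of_nonneg hnn]
  calc ∫ ω, ((1/(m:ℝ)) * ∑ j : Fin m, Z ((σ m j ω):ℕ) ω ^ h - α h)^4 ∂ℙ
      = ∫ ω, ((m:ℝ)⁻¹ * (∑ j : Fin m, U j ω) + (m:ℝ)⁻¹ * (∑ a : Fin m, W a ω))^4 ∂ℙ :=
        integral_congr_ae (ae_of_all _
          (fun ω => congrArg (fun y : ℝ => y^4) (hdecomp ω)))
    _ ≤ ∫ ω, (8*((m:ℝ)⁻¹ * ∑ j : Fin m, U j ω)^4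
          + 8*((m:ℝ)⁻¹ * ∑ a : Fin m, W a ω)^4) ∂ℙ := by
        refine integral_mono hintLHS ((hintSU4.const_mul 8).add (hintSW4.const_mul 8))
          (fun ω => ?_)
        exact add_pow_four_le' _ _
    _ = 8*(∫ ω, ((m:ℝ)⁻¹ * ∑ j : Fin m, U j ω)^4 ∂ℙ)
          + 8*∫ ω, ((m:ℝ)⁻¹ * ∑ a : Fin m, W a ω)^4 ∂ℙ := by
        rw [integral_add (hintSU4.const_mul 8) (hintSW4.const_mul 8),
          integral_const_mul _ _, integral_const_mul _ _]
    _ = 8*((m:ℝ)⁻¹)^4*(∫ ω, (∑ j : Fin m, U j ω)^4 ∂ℙ)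
          + 8*((m:ℝ)⁻¹)^4*∫ ω, (∑ a : Fin m, W a ω)^4 ∂ℙ := by
        simp_rw [mul_pow]
        rw [integral_const_mul _ _, integral_const_mul _ _]
        ring
    _ ≤ 8*((m:ℝ)⁻¹)^4*(16*K2*(m:ℝ)^2) + 8*((m:ℝ)⁻¹)^4*(16*K1*(m:ℝ)^2) := by
        have hp : (0:ℝ) ≤ 8*((m:ℝ)⁻¹)^4 := by positivity
        exact add_le_add (mul_le_mul_of_nonneg_left hsumU4 hp)
          (mul_le_mul_of_nonneg_left hsumW4 hp)
    _ = (128*K2 + 128*K1)/(m:ℝ)^2 := by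
        field_simp
        ring
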